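/- Let f : ℝ^d → ℝ be μ-strongly convex with L-Lipschitz gradient, 0 < μ < L, and let κ = L/μ. Suppose x_k, x_{k+1} ∈ ℝ^d satisfy the exact line search orthogonality condition ∇f(x_{k+1})ᵀ(x_{k+1} - x_k) = 0. Let s_k = x_{k+1} - x_k and y_k = ∇f(x_{k+1}) - ∇f(x_k). Then f(x_k) - f(x_{k+1}) ≥ (1/(1 + √κ)) s_kᵀ y_k. -/

import Mathlib

open scoped InnerProductSpace

section Helpers

open Set

variable {E : Type*} [NormedAddCommGroup E] [InnerProductSpace ℝ E] [CompleteSpace E]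

/-- Directional derivative along a line from a gradient. -/
lemma hasDerivAt_line' {φ : E → ℝ} {φ' : E → E} (hd : ∀ z, HasGradientAt φ (φ' z) z)
    (y v : E) (t : ℝ) :
    HasDerivAt (fun s : ℝ => φ (y + s • v)) ⟪φ' (y + t • v), v⟫_ℝ t := by
  have hline : HasDerivAt (fun s : ℝ => y + s • v) v t := by
    simpa using ((hasDerivAt_id t).smul_const v).const_add y
  have hF : HasFDerivAt φ (InnerProductSpace.toDual ℝ E (φ' (y + t • v))) (y + t • v) :=
    (hasGradientAt_iff_hasFDerivAt).mp (hd _)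
  have h := hF.comp_hasDerivAt t hline
  simp only [InnerProductSpace.toDual_apply_apply] at h
  exact h

/-- Gradient inequality for a convex differentiable function. -/
lemma grad_ineq' {φ : E → ℝ} {φ' : E → E} (hc : ConvexOn ℝ univ φ)
    (hd : ∀ z, HasGradientAt φ (φ' z) z) (x y : E) :
    φ y + ⟪φ' y, x - y⟫_ℝ ≤ φ x := by
  set v := x - y with hv
  have hψ : ConvexOn ℝ univ (fun s : ℝ => φ (y + s • v)) := by
    have := hc.comp_affineMap (AffineMap.lineMap y x)
    have heq : (fun s : ℝ => φ (y + s • v)) = φ ∘ (AffineMap.lineMap y x) := by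
      funext s
      simp [AffineMap.lineMap_apply, hv, add_comm]
    rw [heq]
    simpa using this
  have hslope := hψ.le_slope_of_hasDerivAt (mem_univ (0:ℝ)) (mem_univ (1:ℝ)) zero_lt_one
    (by simpa using hasDerivAt_line' hd y v 0)
  rw [slope_def_field] at hslope
  simp only [div_one, zero_smul, add_zero, one_smul] at hslope
  have h1 : y + v = x := by simp [hv]
  rw [h1] at hslope
  linarith

/-- Monotone gradient implies convexity. -/
lemma convex_of_monotone_grad' {φ : E → ℝ} {φ' : E → E}
    (hd : ∀ z, HasGradientAt φ (φ' z) z)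
    (hmono : ∀ x y : E, 0 ≤ ⟪φ' x - φ' y, x - y⟫_ℝ) :
    ConvexOn ℝ univ φ := by
  refine ⟨convex_univ, fun x _ y _ a b ha hb hab => ?_⟩
  set v := x - y with hv
  set ψ := fun s : ℝ => φ (y + s • v) with hψdef
  have hder : ∀ t : ℝ, HasDerivAt ψ ⟪φ' (y + t • v), v⟫_ℝ t := hasDerivAt_line' hd y v
  have hdiff : Differentiable ℝ ψ := fun t => (hder t).differentiableAt
  have hderiv : deriv ψ = fun t => ⟪φ' (y + t • v), v⟫_ℝ := funext fun t => (hder t).deriv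
  have hmonoψ : Monotone (deriv ψ) := by
    rw [hderiv]
    intro s t hst
    dsimp only
    rcases eq_or_lt_of_le hst with rfl | hlt
    · exact le_rfl
    · have h := hmono (y + t • v) (y + s • v)
      have he : (y + t • v) - (y + s • v) = (t - s) • v := by
        rw [sub_smul]; abel
      rw [he, real_inner_smul_right, inner_sub_left] at h
      nlinarith [h, sub_pos.mpr hlt]
  have hψc : ConvexOn ℝ univ ψ := hmonoψ.convexOn_univ_of_deriv hdiff
  have := hψc.2 (mem_univ (1:ℝ)) (mem_univ (0:ℝ)) ha hb hab
  simp only [smul_eq_mul, mul_one, mul_zero, add_zero, hψdef] at this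
  have h1 : y + (1:ℝ) • v = x := by simp [hv]
  have h0 : y + (0:ℝ) • v = y := by simp
  have h2 : y + a • v = a • x + b • y := by
    have hb1 : b = 1 - a := by linarith
    rw [hv, hb1, smul_sub, sub_smul, one_smul]; abel
  rw [h1, h0, h2] at this
  simpa using this

lemma hasGradientAt_quad' (C : ℝ) (z : E) :
    HasGradientAt (fun w : E => C / 2 * ‖w‖ ^ 2) (C • z) z := by
  rw [hasGradientAt_iff_hasFDerivAt]
  have h := ((hasStrictFDerivAt_norm_sq z).hasFDerivAt).const_mul (C/2)
  convert h using 1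
  · rfl
  ext w
  simp [InnerProductSpace.toDual_apply_apply, real_inner_smul_left, two_smul, inner_add_left]
  ring

lemma hasGradientAt_sub' {φ : E → ℝ} {φ' : E → E} (hd : ∀ z, HasGradientAt φ (φ' z) z)
    {g : E → ℝ} {g' : E → E} (hg : ∀ z, HasGradientAt g (g' z) z) (z : E) :
    HasGradientAt (fun w => φ w - g w) (φ' z - g' z) z := by
  rw [hasGradientAt_iff_hasFDerivAt]
  have := ((hasGradientAt_iff_hasFDerivAt).mp (hd z)).sub
    ((hasGradientAt_iff_hasFDerivAt).mp (hg z))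
  rw [map_sub]
  exact this

lemma hasGradientAt_inner_const' (a : E) (z : E) :
    HasGradientAt (fun w : E => ⟪a, w⟫_ℝ) a z := by
  rw [hasGradientAt_iff_hasFDerivAt]
  have h : HasFDerivAt (innerSL ℝ a : E →L[ℝ] ℝ) (innerSL ℝ a) z := (innerSL ℝ a).hasFDerivAt
  convert h using 1
  · rfl
  · funext w; rfl
  · ext w; simp [InnerProductSpace.toDual_apply_apply]

/-- Descent lemma from convexity of `C/2‖·‖² - φ`. -/
lemma descent_lemma' {φ : E → ℝ} {φ' : E → E} {C : ℝ}
    (hd : ∀ z, HasGradientAt φ (φ' z) z)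
    (hc2 : ConvexOn ℝ univ (fun z => C / 2 * ‖z‖ ^ 2 - φ z)) (x y : E) :
    φ x ≤ φ y + ⟪φ' y, x - y⟫_ℝ + C / 2 * ‖x - y‖ ^ 2 := by
  have hdh : ∀ z, HasGradientAt (fun w => C / 2 * ‖w‖ ^ 2 - φ w) (C • z - φ' z) z :=
    fun z => hasGradientAt_sub' (fun w => hasGradientAt_quad' C w) hd z
  have h := grad_ineq' hc2 hdh x y
  have hexp : ⟪C • y - φ' y, x - y⟫_ℝ = C * ⟪y, x - y⟫_ℝ - ⟪φ' y, x - y⟫_ℝ := by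
    rw [inner_sub_left, real_inner_smul_left]
  have hnorm : ‖x - y‖ ^ 2 = ‖x‖ ^ 2 - 2 * ⟪y, x - y⟫_ℝ - ‖y‖ ^ 2 := by
    rw [inner_sub_right, real_inner_comm, @norm_sub_sq_real E, real_inner_self_eq_norm_sq]
    ring
  rw [hexp] at h
  have h2 : C / 2 * ‖x - y‖ ^ 2 = C / 2 * ‖x‖ ^ 2 - C * ⟪y, x - y⟫_ℝ - C / 2 * ‖y‖ ^ 2 := by
    rw [hnorm]; ring
  linarith [h, h2]

/-- Co-coercivity. -/
lemma cocoercivity' {φ : E → ℝ} {φ' : E → E} {C : ℝ} (hC : 0 < C)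
    (hd : ∀ z, HasGradientAt φ (φ' z) z)
    (hc : ConvexOn ℝ univ φ)
    (hc2 : ConvexOn ℝ univ (fun z => C / 2 * ‖z‖ ^ 2 - φ z)) (x y : E) :
    ‖φ' y - φ' x‖ ^ 2 / (2 * C) ≤ φ y - φ x - ⟪φ' x, y - x⟫_ℝ := by
  set Φ := fun z => φ z - ⟪φ' x, z⟫_ℝ with hΦdef
  set Φ' := fun z => φ' z - φ' x with hΦ'def
  have hdΦ : ∀ z, HasGradientAt Φ (Φ' z) z :=
    fun z => hasGradientAt_sub' hd (fun w => hasGradientAt_inner_const' (φ' x) w) z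
  have hmono : ∀ u v : E, 0 ≤ ⟪φ' u - φ' v, u - v⟫_ℝ := by
    intro u v
    have h1 := grad_ineq' hc hd u v
    have h2 := grad_ineq' hc hd v u
    have : ⟪φ' u, v - u⟫_ℝ = -⟪φ' u, u - v⟫_ℝ := by
      rw [← inner_neg_right]; congr 1; abel
    rw [inner_sub_left]
    nlinarith [h1, h2, this]
  have hmono2 : ∀ u v : E, 0 ≤ ⟪(C • u - φ' u) - (C • v - φ' v), u - v⟫_ℝ := by
    intro u v
    have hq : ∀ z, HasGradientAt (fun w : E => C / 2 * ‖w‖ ^ 2 - φ w) (C • z - φ' z) z :=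
      fun z => hasGradientAt_sub' (fun w => hasGradientAt_quad' C w) hd z
    have h1 := grad_ineq' hc2 hq u v
    have h2 := grad_ineq' hc2 hq v u
    have : ⟪C • u - φ' u, v - u⟫_ℝ = -⟪C • u - φ' u, u - v⟫_ℝ := by
      rw [← inner_neg_right]; congr 1; abel
    rw [inner_sub_left]
    nlinarith [h1, h2, this]
  have hc2Φ : ConvexOn ℝ univ (fun z => C / 2 * ‖z‖ ^ 2 - Φ z) := by
    apply convex_of_monotone_grad'
      (fun z => hasGradientAt_sub' (fun w => hasGradientAt_quad' C w) hdΦ z)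
    intro u v
    have := hmono2 u v
    have he : (C • u - Φ' u) - (C • v - Φ' v) = (C • u - φ' u) - (C • v - φ' v) := by
      simp only [hΦ'def]; abel
    rw [he]
    exact this
  have hcΦ : ConvexOn ℝ univ Φ := by
    apply convex_of_monotone_grad' hdΦ
    intro u v
    have he : Φ' u - Φ' v = φ' u - φ' v := by simp only [hΦ'def]; abel
    rw [he]; exact hmono u v
  have hmin : ∀ z, Φ x ≤ Φ z := by
    intro z
    have := grad_ineq' hcΦ hdΦ z x
    have hx0 : Φ' x = 0 := by simp [hΦ'def]
    rw [hx0] at this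
    simpa using this
  have hz := hmin (y - (1/C) • Φ' y)
  have hdesc := descent_lemma' hdΦ hc2Φ (y - (1/C) • Φ' y) y
  have he1 : (y - (1/C) • Φ' y) - y = -((1/C) • Φ' y) := by abel
  rw [he1] at hdesc
  have he2 : ⟪Φ' y, -((1/C) • Φ' y)⟫_ℝ = -(1/C) * ‖Φ' y‖ ^ 2 := by
    rw [inner_neg_right, real_inner_smul_right, real_inner_self_eq_norm_sq]
    ring
  have he3 : ‖-((1/C) • Φ' y)‖ ^ 2 = (1/C)^2 * ‖Φ' y‖ ^ 2 := by
    rw [norm_neg, norm_smul, Real.norm_eq_abs, abs_of_pos (by positivity : (0:ℝ) < 1/C)]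
    ring
  rw [he2, he3] at hdesc
  have hkey : Φ x ≤ Φ y - ‖Φ' y‖ ^ 2 / (2 * C) := by
    have := le_trans hz hdesc
    have hC' : C ≠ 0 := ne_of_gt hC
    have : Φ x ≤ Φ y + (-(1/C) * ‖Φ' y‖ ^ 2 + C / 2 * ((1/C)^2 * ‖Φ' y‖ ^ 2)) := by linarith
    calc Φ x ≤ Φ y + (-(1/C) * ‖Φ' y‖ ^ 2 + C / 2 * ((1/C)^2 * ‖Φ' y‖ ^ 2)) := this
    _ = Φ y - ‖Φ' y‖ ^ 2 / (2 * C) := by field_simp; ring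
  simp only [hΦdef, hΦ'def] at hkey
  have hi : ⟪φ' x, y⟫_ℝ - ⟪φ' x, x⟫_ℝ = ⟪φ' x, y - x⟫_ℝ := by rw [inner_sub_right]
  linarith [hkey, hi.ge, hi.le]

lemma final_arith' (S Y P D a b μ L : ℝ) (ha2 : a ^ 2 = μ) (hb2 : b ^ 2 = L)
    (hap : 0 < a) (hab : a < b) (hSnn : 0 ≤ S) (hYnn : 0 ≤ Y) (hPSY : P ≤ S * Y)
    (hkey : μ ^ 2 * S ^ 2 - 2 * μ * P + Y ^ 2 ≤ 2 * (L - μ) * (D - μ / 2 * S ^ 2)) :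
    a * P ≤ D * (a + b) := by
  subst ha2 hb2
  have h3 : 0 ≤ 2 * (b - a) * ((a + b) * D - a * P) := by
    nlinarith [sq_nonneg (Y - a * b * S), hkey,
      mul_le_mul_of_nonneg_left hPSY (mul_nonneg hap.le (hap.trans hab).le)]
  nlinarith [h3, sub_pos.mpr hab]

end Helpers

/-- Under exact line search orthogonality, `f(x_k) - f(x_{k+1}) ≥ s_kᵀ y_k / (1 + √κ)`. -/
theorem function_decrease_exact_line_search {d : ℕ} (f : EuclideanSpace ℝ (Fin d) → ℝ)
    (μ L : ℝ) (hμ : 0 < μ) (hμL : μ < L) (hf : ContDiff ℝ 2 f)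
    (hsc : StrongConvexOn Set.univ μ f)
    (hlip : LipschitzWith (Real.toNNReal L) (gradient f))
    (xk xk1 : EuclideanSpace ℝ (Fin d))
    (horth : ⟪gradient f xk1, xk1 - xk⟫_ℝ = 0) :
    f xk - f xk1 ≥ (1 / (1 + Real.sqrt (L / μ))) *
      ⟪xk1 - xk, gradient f xk1 - gradient f xk⟫_ℝ := by
  have hL : 0 < L := hμ.trans hμL
  have hdf : ∀ z, HasGradientAt f (gradient f z) z := fun z =>
    ((hf.differentiable (by norm_num)) z).hasGradientAt
  set g : EuclideanSpace ℝ (Fin d) → ℝ := fun z => f z - μ / 2 * ‖z‖ ^ 2 with hgdef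
  set g' : EuclideanSpace ℝ (Fin d) → EuclideanSpace ℝ (Fin d) :=
    fun z => gradient f z - μ • z with hg'def
  have hdg : ∀ z, HasGradientAt g (g' z) z := fun z =>
    hasGradientAt_sub' hdf (fun w => hasGradientAt_quad' μ w) z
  have hgc : ConvexOn ℝ Set.univ g := strongConvexOn_iff_convex.mp hsc
  -- Lipschitz bound
  have hΔ : ∀ u v : EuclideanSpace ℝ (Fin d),
      ‖gradient f u - gradient f v‖ ≤ L * ‖u - v‖ := by
    intro u v
    have := hlip.dist_le_mul u v
    rwa [dist_eq_norm, dist_eq_norm, Real.coe_toNNReal L hL.le] at this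
  -- convexity of (L-μ)/2‖·‖² - g
  have hc2 : ConvexOn ℝ Set.univ (fun z => (L - μ) / 2 * ‖z‖ ^ 2 - g z) := by
    apply convex_of_monotone_grad'
      (fun z => hasGradientAt_sub' (fun w => hasGradientAt_quad' (L - μ) w) hdg z)
    intro u v
    have he : ((L - μ) • u - g' u) - ((L - μ) • v - g' v)
        = L • (u - v) - (gradient f u - gradient f v) := by
      simp only [hg'def]
      module
    rw [he, inner_sub_left, real_inner_smul_left, real_inner_self_eq_norm_sq]
    have h1 := real_inner_le_norm (gradient f u - gradient f v) (u - v)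
    have h2 := hΔ u v
    nlinarith [norm_nonneg (u - v), norm_nonneg (gradient f u - gradient f v)]
  have hcoco := cocoercivity' (by linarith : (0:ℝ) < L - μ) hdg hgc hc2 xk1 xk
  -- notation
  set S := ‖xk1 - xk‖ with hS
  set Y := ‖gradient f xk1 - gradient f xk‖ with hY
  set P := ⟪xk1 - xk, gradient f xk1 - gradient f xk⟫_ℝ with hP
  set D := f xk - f xk1 with hD
  -- simplify RHS of hcoco
  have hz1 : ⟪gradient f xk1, xk - xk1⟫_ℝ = 0 := by
    have : xk - xk1 = -(xk1 - xk) := by abel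
    rw [this, inner_neg_right, horth, neg_zero]
  have hrhs : g xk - g xk1 - ⟪g' xk1, xk - xk1⟫_ℝ = D - μ / 2 * S ^ 2 := by
    simp only [hgdef, hg'def, inner_sub_left, real_inner_smul_left, hz1]
    have hns : S ^ 2 = ‖xk1‖ ^ 2 - 2 * ⟪xk1, xk⟫_ℝ + ‖xk‖ ^ 2 := by
      rw [hS, @norm_sub_sq_real]
    have hi : ⟪xk1, xk - xk1⟫_ℝ = ⟪xk1, xk⟫_ℝ - ‖xk1‖ ^ 2 := by
      rw [inner_sub_right, real_inner_self_eq_norm_sq]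
    rw [hi]
    simp only [hD]
    nlinarith [hns]
  -- simplify LHS of hcoco
  have hlhs : ‖g' xk - g' xk1‖ ^ 2 = μ ^ 2 * S ^ 2 - 2 * μ * P + Y ^ 2 := by
    have he : g' xk - g' xk1
        = μ • (xk1 - xk) - (gradient f xk1 - gradient f xk) := by
      simp only [hg'def]
      module
    rw [he, @norm_sub_sq_real, norm_smul, real_inner_smul_left, Real.norm_eq_abs,
      abs_of_pos hμ, ← hS, ← hY, ← hP]
    ring
  rw [hlhs, hrhs] at hcoco
  have hkey : μ ^ 2 * S ^ 2 - 2 * μ * P + Y ^ 2 ≤ 2 * (L - μ) * (D - μ / 2 * S ^ 2) := by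
    rw [div_le_iff₀ (by linarith : (0:ℝ) < 2 * (L - μ))] at hcoco
    linarith [hcoco]
  -- square roots
  set a := Real.sqrt μ with ha
  set b := Real.sqrt L with hb
  have ha2 : a ^ 2 = μ := Real.sq_sqrt hμ.le
  have hb2 : b ^ 2 = L := Real.sq_sqrt hL.le
  have hap : 0 < a := Real.sqrt_pos.mpr hμ
  have hab : a < b := Real.sqrt_lt_sqrt hμ.le hμL
  have hsq : Real.sqrt (L / μ) = b / a := Real.sqrt_div hL.le μ
  have hPSY : P ≤ S * Y := by
    rw [hP, hS, hY]
    exact real_inner_le_norm _ _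
  rw [ge_iff_le, hsq]
  have hcoef : 1 / (1 + b / a) = a / (a + b) := by
    have h1 : 1 + b / a = (a + b) / a := by field_simp
    rw [h1, one_div_div]
  rw [hcoef, div_mul_eq_mul_div, div_le_iff₀ (by linarith : (0:ℝ) < a + b)]
  exact final_arith' S Y P D a b μ L ha2 hb2 hap hab (norm_nonneg _) (norm_nonneg _) hPSY hkey
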